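/- Reduction of modular equivalence to visible equivalence: for compatible modules P and Q (same input signature I and same output signature), P ≡ₘ Q if and only if P ⊔ G_I ≡ᵥ Q ⊔ G_I, where G_I = ⟨{{I} ←}, ∅, I, ∅⟩ is the module consisting of a single choice rule generating all subsets of I. -/

import Mathlib

attribute [local instance] Classical.propDecidable

/-- Rules of smodels programs: choice rules `{A} ← B, not C` and weight rules
`a ← w ≤ {B = wB, not C = wC}`. -/
inductive SRule : Type
  | choice (A B C : Finset ℕ) : SRule
  | weight (a : ℕ) (w : ℕ) (B C : Finset ℕ) (wB wC : ℕ → ℕ) : SRule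

def SRule.heads : SRule → Finset ℕ
  | .choice A _ _ => A
  | .weight a _ _ _ _ _ => {a}

def SRule.pos : SRule → Finset ℕ
  | .choice _ B _ => B
  | .weight _ _ B _ _ _ => B

def SRule.neg : SRule → Finset ℕ
  | .choice _ _ C => C
  | .weight _ _ _ C _ _ => C

def SRule.atoms (r : SRule) : Set ℕ := ↑r.heads ∪ ↑r.pos ∪ ↑r.neg

/-- A positive weight rule `head ← w ≤ {B = wB}`. -/
structure PosW where
  head : ℕ
  w : ℕ
  B : Finset ℕ
  wB : ℕ → ℕ

/-- Weight realized by an interpretation `X` on a positive weight body. -/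
noncomputable def wsum (B : Finset ℕ) (wB : ℕ → ℕ) (X : Set ℕ) : ℕ :=
  ∑ b ∈ B.filter (· ∈ X), wB b

/-- Least model of a positive (weight) program. -/
def lmW (Q : Set PosW) : Set ℕ :=
  ⋂₀ {X | ∀ p ∈ Q, p.w ≤ wsum p.B p.wB X → p.head ∈ X}

/-- The input-aware reduct `R^{M,I}` of a set of smodels rules. -/
noncomputable def sreduct (R : Set SRule) (I M : Set ℕ) : Set PosW :=
  {p | (∃ A B C, SRule.choice A B C ∈ R ∧ ∃ a ∈ A, a ∈ M ∧
          (B : Set ℕ) ∩ I ⊆ M ∧ (C : Set ℕ) ∩ M = ∅ ∧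
          p = ⟨a, (B.filter (· ∉ I)).card, B.filter (· ∉ I), fun _ => 1⟩)
     ∨ (∃ a w B C wB wC, SRule.weight a w B C wB wC ∈ R ∧
          p = ⟨a, w - (∑ b ∈ B.filter (fun b => b ∈ I ∧ b ∈ M), wB b)
                 - (∑ c ∈ C.filter (· ∉ M), wC c),
               B.filter (· ∉ I), wB⟩)}

/-- An smodels program module `⟨R, I, O, H⟩`. -/
structure SMod where
  R : Set SRule
  I : Set ℕ
  O : Set ℕ
  H : Set ℕ

def SMod.hb (P : SMod) : Set ℕ := P.I ∪ P.O ∪ P.H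

def SMod.vis (P : SMod) : Set ℕ := P.I ∪ P.O

def SMod.wf (P : SMod) : Prop :=
  P.I ∩ P.O = ∅ ∧ P.I ∩ P.H = ∅ ∧ P.O ∩ P.H = ∅ ∧
  (∀ r ∈ P.R, r.atoms ⊆ P.hb) ∧ (∀ r ∈ P.R, (r.heads : Set ℕ) ∩ P.I = ∅)

/-- Stable models of an smodels program module. -/
def SMod.SM (P : SMod) : Set (Set ℕ) :=
  {M | M ⊆ P.hb ∧ M \ P.I = lmW (sreduct P.R P.I M)}

def sdepEdge (R : Set SRule) (b a : ℕ) : Prop := ∃ r ∈ R, a ∈ r.heads ∧ b ∈ r.pos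

def sdep (R : Set SRule) : ℕ → ℕ → Prop := Relation.ReflTransGen (sdepEdge R)

/-- The composition `P₁ ⊕ P₂` (also underlying the join `⊔`). -/
def SMod.comp (P₁ P₂ : SMod) : SMod :=
  ⟨P₁.R ∪ P₂.R, (P₁.I \ P₂.O) ∪ (P₂.I \ P₁.O), P₁.O ∪ P₂.O, P₁.H ∪ P₂.H⟩

def compDefined (P₁ P₂ : SMod) : Prop :=
  P₁.O ∩ P₂.O = ∅ ∧ P₁.H ∩ P₂.hb = ∅ ∧ P₂.H ∩ P₁.hb = ∅

def mutuallyDep (P₁ P₂ : SMod) : Prop :=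
  ∃ a ∈ P₁.O, ∃ b ∈ P₂.O,
    sdep (P₁.R ∪ P₂.R) a b ∧ sdep (P₁.R ∪ P₂.R) b a

def joinDefined (P₁ P₂ : SMod) : Prop := compDefined P₁ P₂ ∧ ¬ mutuallyDep P₁ P₂

def compatible (P₁ P₂ : SMod) (M₁ M₂ : Set ℕ) : Prop :=
  M₁ ∩ P₂.vis = M₂ ∩ P₁.vis

def natJoin (P₁ P₂ : SMod) (A₁ A₂ : Set (Set ℕ)) : Set (Set ℕ) :=
  {M | ∃ M₁ ∈ A₁, ∃ M₂ ∈ A₂, compatible P₁ P₂ M₁ M₂ ∧ M = M₁ ∪ M₂}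

/-- Visible equivalence of modules. -/
def SMod.visEq (P Q : SMod) : Prop :=
  P.vis = Q.vis ∧ ∃ f : P.SM → Q.SM, Function.Bijective f ∧
    ∀ M : P.SM, (M : Set ℕ) ∩ P.vis = (f M : Set ℕ) ∩ Q.vis

/-- Modular equivalence of modules. -/
def SMod.modEq (P Q : SMod) : Prop := P.I = Q.I ∧ P.visEq Q

/-- The generator module `G_I = ⟨{{I} ←}, ∅, I, ∅⟩`. -/
def genMod (I : Finset ℕ) : SMod := ⟨{SRule.choice I ∅ ∅}, ∅, ↑I, ∅⟩

section Aux

lemma wsum_mono (B : Finset ℕ) (wB : ℕ → ℕ) {X Y : Set ℕ} (h : X ⊆ Y) :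
    wsum B wB X ≤ wsum B wB Y := by
  unfold wsum
  apply Finset.sum_le_sum_of_subset
  intro b hb
  simp only [Finset.mem_filter] at hb ⊢
  exact ⟨hb.1, h hb.2⟩

def closedW (Q : Set PosW) (X : Set ℕ) : Prop :=
  ∀ p ∈ Q, p.w ≤ wsum p.B p.wB X → p.head ∈ X

lemma lmW_subset {Q : Set PosW} {X : Set ℕ} (hX : closedW Q X) : lmW Q ⊆ X :=
  Set.sInter_subset_of_mem hX

lemma lmW_closed (Q : Set PosW) : closedW Q (lmW Q) := by
  intro p hp hw
  rw [lmW, Set.mem_sInter]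
  intro X hX
  exact hX p hp (le_trans hw (wsum_mono _ _ (lmW_subset hX)))

lemma lmW_heads (Q : Set PosW) : lmW Q ⊆ {a | ∃ p ∈ Q, p.head = a} :=
  lmW_subset (fun p hp _ => ⟨p, hp, rfl⟩)

lemma sreduct_head (R : Set SRule) (I' M : Set ℕ) {p : PosW}
    (hp : p ∈ sreduct R I' M) : ∃ r ∈ R, p.head ∈ r.heads := by
  simp only [sreduct, Set.mem_setOf_eq] at hp
  rcases hp with ⟨A, B, C, hr, a, ha, _, _, _, hpe⟩ | ⟨a, w, B, C, wB, wC, hr, hpe⟩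
  · exact ⟨_, hr, by rw [hpe]; exact ha⟩
  · exact ⟨_, hr, by rw [hpe]; simp [SRule.heads]⟩

lemma wsum_one (B : Finset ℕ) (X : Set ℕ) :
    wsum B (fun _ => 1) X = (B.filter (· ∈ X)).card := by
  simp [wsum]

lemma card_le_of_subset_set {B : Finset ℕ} {X : Set ℕ} (h : ↑B ⊆ X) :
    B.filter (· ∈ X) = B :=
  Finset.filter_true_of_mem (fun b hb => h hb)

lemma subset_of_card_le {B : Finset ℕ} {X : Set ℕ}
    (h : B.card ≤ (B.filter (· ∈ X)).card) : ↑B ⊆ X := by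
  have heq := Finset.eq_of_subset_of_card_le (Finset.filter_subset _ B) h
  intro b hb
  have : b ∈ B.filter (· ∈ X) := by rw [heq]; exact hb
  exact (Finset.mem_filter.mp this).2

lemma wsum_split (B : Finset ℕ) (wB : ℕ → ℕ) (I X : Set ℕ) :
    wsum B wB X = wsum (B.filter (· ∉ I)) wB X
      + ∑ b ∈ B.filter (fun b => b ∈ I ∧ b ∈ X), wB b := by
  unfold wsum
  rw [← Finset.sum_filter_add_sum_filter_not (B.filter (· ∈ X)) (· ∉ I) wB]
  congr 1
  · congr 1
    ext b
    simp only [Finset.mem_filter]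
    tauto
  · congr 1
    ext b
    simp only [Finset.mem_filter, not_not]
    tauto

lemma filter_and_congr {B : Finset ℕ} {S X Y : Set ℕ}
    (h : ∀ b, b ∈ S → (b ∈ X ↔ b ∈ Y)) :
    B.filter (fun b => b ∈ S ∧ b ∈ X) = B.filter (fun b => b ∈ S ∧ b ∈ Y) := by
  ext b
  simp only [Finset.mem_filter]
  constructor
  · rintro ⟨hb, h1, h2⟩; exact ⟨hb, h1, (h b h1).mp h2⟩
  · rintro ⟨hb, h1, h2⟩; exact ⟨hb, h1, (h b h1).mpr h2⟩

lemma wsum_congr_not {B : Finset ℕ} {wB : ℕ → ℕ} {S X Y : Set ℕ}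
    (h : ∀ b, b ∉ S → (b ∈ X ↔ b ∈ Y)) :
    wsum (B.filter (fun b => b ∉ S)) wB X = wsum (B.filter (fun b => b ∉ S)) wB Y := by
  unfold wsum
  apply Finset.sum_congr _ (fun _ _ => rfl)
  ext b
  simp only [Finset.mem_filter]
  constructor
  · rintro ⟨⟨hb, h1⟩, h2⟩; exact ⟨⟨hb, h1⟩, (h b h1).mp h2⟩
  · rintro ⟨⟨hb, h1⟩, h2⟩; exact ⟨⟨hb, h1⟩, (h b h1).mpr h2⟩

lemma sum_filter_and_le {B : Finset ℕ} {wB : ℕ → ℕ} {S X Y : Set ℕ}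
    (h : ∀ b, b ∈ S → b ∈ X → b ∈ Y) :
    (∑ b ∈ B.filter (fun b => b ∈ S ∧ b ∈ X), wB b)
      ≤ ∑ b ∈ B.filter (fun b => b ∈ S ∧ b ∈ Y), wB b := by
  apply Finset.sum_le_sum_of_subset
  intro b hb
  simp only [Finset.mem_filter] at hb ⊢
  exact ⟨hb.1, hb.2.1, h b hb.2.1 hb.2.2⟩

end Aux

lemma lmW_gen_eq (R : Set SRule) (I : Finset ℕ) (S S0 M : Set ℕ)
    (hS : S = ↑I) (hS0 : S0 = ∅)
    (hheads : ∀ r ∈ R, (↑r.heads : Set ℕ) ∩ S = ∅) :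
    lmW (sreduct (R ∪ {SRule.choice I ∅ ∅}) S0 M)
      = lmW (sreduct R S M) ∪ (S ∩ M) := by
  have hS0' : ∀ b : ℕ, b ∉ S0 := by rw [hS0]; exact fun b => Set.notMem_empty b
  have hYI : ∀ a ∈ lmW (sreduct R S M), a ∉ S := by
    intro a ha haI
    obtain ⟨p, hp, rfl⟩ := lmW_heads _ ha
    obtain ⟨r, hr, hhead⟩ := sreduct_head _ _ _ hp
    have h2 := hheads r hr
    have : p.head ∈ (↑r.heads : Set ℕ) ∩ S := ⟨Finset.mem_coe.mpr hhead, haI⟩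
    rw [h2] at this
    exact this
  have hIM : S ∩ M ⊆ lmW (sreduct (R ∪ {SRule.choice I ∅ ∅}) S0 M) := by
    rintro a ⟨haI, haM⟩
    have haI' : a ∈ I := by rw [hS] at haI; exact haI
    have hmem : (⟨a, 0, ∅, fun _ => 1⟩ : PosW)
        ∈ sreduct (R ∪ {SRule.choice I ∅ ∅}) S0 M := by
      left
      refine ⟨I, ∅, ∅, Or.inr rfl, a, haI', haM, by simp, by simp, ?_⟩
      simp
    exact lmW_closed _ _ hmem (Nat.zero_le _)
  apply Set.Subset.antisymm
  · -- forward: lmW Q₀ ⊆ Y ∪ (S ∩ M)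
    apply lmW_subset
    intro p hp hw
    rcases hp with ⟨A, B, C, hr, a, haA, haM, _, hCM, rfl⟩
      | ⟨a, w, B, C, wB, wC, hr, rfl⟩
    · -- choice rule
      rcases hr with hr | hr
      · -- rule in R
        have hBf : B.filter (fun b => b ∉ S0) = B :=
          Finset.filter_true_of_mem (fun b _ => hS0' b)
        simp only at hw
        rw [hBf, wsum_one] at hw
        have hBsub : ↑B ⊆ lmW (sreduct R S M) ∪ (S ∩ M) := subset_of_card_le hw
        have hBIM : (↑B : Set ℕ) ∩ S ⊆ M := by
          rintro b ⟨hbB, hbI⟩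
          rcases hBsub hbB with hb | hb
          · exact absurd hbI (hYI b hb)
          · exact hb.2
        left
        show a ∈ lmW (sreduct R S M)
        refine lmW_closed (sreduct R S M) _
          (Or.inl ⟨A, B, C, hr, a, haA, haM, hBIM, hCM, rfl⟩) ?_
        dsimp only
        have hBfY : ↑(B.filter (fun b => b ∉ S)) ⊆ lmW (sreduct R S M) := by
          intro b hb
          simp only [Finset.coe_filter, Set.mem_setOf_eq] at hb
          rcases hBsub hb.1 with h | h
          · exact h
          · exact absurd h.1 hb.2
        rw [wsum_one, card_le_of_subset_set hBfY]
      · -- the generator rule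
        have heq : A = I ∧ B = (∅ : Finset ℕ) ∧ C = (∅ : Finset ℕ) := by
          simpa only [Set.mem_singleton_iff, SRule.choice.injEq] using hr
        right
        refine ⟨?_, haM⟩
        rw [hS]
        exact Finset.mem_coe.mpr (heq.1 ▸ haA)
    · -- weight rule
      rcases hr with hr | hr
      swap
      · simp at hr
      have hBf : B.filter (fun b => b ∉ S0) = B :=
        Finset.filter_true_of_mem (fun b _ => hS0' b)
      have hS0f : B.filter (fun b => b ∈ S0 ∧ b ∈ M) = ∅ := by
        apply Finset.filter_false_of_mem
        intro b _ hb
        exact hS0' b hb.1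
      simp only at hw
      rw [hBf, hS0f] at hw
      simp only [Finset.sum_empty, Nat.sub_zero] at hw
      have hsplit := wsum_split B wB S (lmW (sreduct R S M) ∪ (S ∩ M))
      have hfilt1 : ∀ b, b ∈ S → (b ∈ lmW (sreduct R S M) ∪ (S ∩ M) ↔ b ∈ M) := by
        intro b hbS
        constructor
        · rintro (h | h)
          · exact absurd hbS (hYI b h)
          · exact h.2
        · intro h
          exact Or.inr ⟨hbS, h⟩
      have hfilt2 : ∀ b, b ∉ S →
          (b ∈ lmW (sreduct R S M) ∪ (S ∩ M) ↔ b ∈ lmW (sreduct R S M)) := by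
        intro b hbS
        constructor
        · rintro (h | h)
          · exact h
          · exact absurd h.1 hbS
        · intro h
          exact Or.inl h
      rw [hsplit, filter_and_congr hfilt1, wsum_congr_not hfilt2] at hw
      left
      show a ∈ lmW (sreduct R S M)
      refine lmW_closed (sreduct R S M) _
        (Or.inr ⟨a, w, B, C, wB, wC, hr, rfl⟩) ?_
      dsimp only
      omega
  · apply Set.union_subset _ hIM
    apply lmW_subset
    intro p hp hw
    rcases hp with ⟨A, B, C, hr, a, haA, haM, hBIM, hCM, rfl⟩
      | ⟨a, w, B, C, wB, wC, hr, rfl⟩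
    · -- choice rule of R
      simp only at hw
      rw [wsum_one] at hw
      have hBfsub : ↑(B.filter (fun b => b ∉ S))
          ⊆ lmW (sreduct (R ∪ {SRule.choice I ∅ ∅}) S0 M) := subset_of_card_le hw
      have hBsub : ↑B ⊆ lmW (sreduct (R ∪ {SRule.choice I ∅ ∅}) S0 M) := by
        intro b hb
        by_cases hbI : b ∈ S
        · exact hIM ⟨hbI, hBIM ⟨hb, hbI⟩⟩
        · exact hBfsub (by simp only [Finset.coe_filter, Set.mem_setOf_eq]; exact ⟨hb, hbI⟩)
      show a ∈ lmW (sreduct (R ∪ {SRule.choice I ∅ ∅}) S0 M)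
      refine lmW_closed (sreduct (R ∪ {SRule.choice I ∅ ∅}) S0 M) _
        (Or.inl ⟨A, B, C, Or.inl hr, a, haA, haM, by simp [hS0], hCM, rfl⟩) ?_
      dsimp only
      have hBf : B.filter (fun b => b ∉ S0) = B :=
        Finset.filter_true_of_mem (fun b _ => hS0' b)
      rw [hBf, wsum_one, card_le_of_subset_set hBsub]
    · -- weight rule of R
      show a ∈ lmW (sreduct (R ∪ {SRule.choice I ∅ ∅}) S0 M)
      refine lmW_closed (sreduct (R ∪ {SRule.choice I ∅ ∅}) S0 M) _
        (Or.inr ⟨a, w, B, C, wB, wC, Or.inl hr, rfl⟩) ?_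
      dsimp only
      simp only at hw
      have hBf : B.filter (fun b => b ∉ S0) = B :=
        Finset.filter_true_of_mem (fun b _ => hS0' b)
      have hS0f : B.filter (fun b => b ∈ S0 ∧ b ∈ M) = ∅ := by
        apply Finset.filter_false_of_mem
        intro b _ hb
        exact hS0' b hb.1
      rw [hBf, hS0f]
      simp only [Finset.sum_empty, Nat.sub_zero]
      have hsplit := wsum_split B wB S (lmW (sreduct (R ∪ {SRule.choice I ∅ ∅}) S0 M))
      have hsum_le := sum_filter_and_le (B := B) (wB := wB)
        (fun b (hbS : b ∈ S) (hbM : b ∈ M) => hIM ⟨hbS, hbM⟩)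
      omega

lemma lmW_sreduct_not_in (R : Set SRule) (S M : Set ℕ)
    (hheads : ∀ r ∈ R, (↑r.heads : Set ℕ) ∩ S = ∅) :
    ∀ a ∈ lmW (sreduct R S M), a ∉ S := by
  intro a ha haI
  obtain ⟨p, hp, rfl⟩ := lmW_heads _ ha
  obtain ⟨r, hr, hhead⟩ := sreduct_head _ _ _ hp
  have h2 := hheads r hr
  have : p.head ∈ (↑r.heads : Set ℕ) ∩ S := ⟨Finset.mem_coe.mpr hhead, haI⟩
  rw [h2] at this
  exact this

lemma SM_comp_gen (P : SMod) (I : Finset ℕ) (hP : P.wf) (hPI : P.I = ↑I) :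
    (P.comp (genMod I)).SM = P.SM := by
  have hIin : (P.comp (genMod I)).I = ∅ := by
    simp [SMod.comp, genMod, hPI]
  have hhb : (P.comp (genMod I)).hb = P.hb := by
    simp only [SMod.comp, SMod.hb, genMod, hPI]
    ext x
    simp only [Set.mem_union, Set.mem_diff, Set.mem_empty_iff_false]
    tauto
  have hheads := hP.2.2.2.2
  ext M
  simp only [SMod.SM, Set.mem_setOf_eq, hhb, hIin, Set.diff_empty]
  have hR : (P.comp (genMod I)).R = P.R ∪ {SRule.choice I ∅ ∅} := rfl
  rw [hR, lmW_gen_eq P.R I P.I ∅ M hPI rfl hheads]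
  have hYI := lmW_sreduct_not_in P.R P.I M hheads
  constructor
  · rintro ⟨h1, h2⟩
    refine ⟨h1, ?_⟩
    ext x
    constructor
    · rintro ⟨hxM, hxI⟩
      rw [h2] at hxM
      rcases hxM with h | h
      · exact h
      · exact absurd h.1 hxI
    · intro hx
      exact ⟨by rw [h2]; exact Or.inl hx, hYI x hx⟩
  · rintro ⟨h1, h2⟩
    refine ⟨h1, ?_⟩
    ext x
    constructor
    · intro hxM
      by_cases hxI : x ∈ P.I
      · exact Or.inr ⟨hxI, hxM⟩
      · exact Or.inl (by rw [← h2]; exact ⟨hxM, hxI⟩)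
    · rintro (hx | hx)
      · rw [← h2] at hx
        exact hx.1
      · exact hx.2

lemma visEq_congr {P P' Q Q' : SMod} (hS : P.SM = P'.SM) (hv : P.vis = P'.vis)
    (hS' : Q.SM = Q'.SM) (hv' : Q.vis = Q'.vis) : P.visEq Q ↔ P'.visEq Q' := by
  unfold SMod.visEq
  rw [hv, hv']
  constructor
  · rintro ⟨h1, f, hf, hproj⟩
    refine ⟨h1, (Equiv.setCongr hS') ∘ f ∘ (Equiv.setCongr hS).symm,
      (Equiv.setCongr hS').bijective.comp (hf.comp (Equiv.setCongr hS).symm.bijective), ?_⟩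
    intro M
    have := hproj ((Equiv.setCongr hS).symm M)
    exact this
  · rintro ⟨h1, f, hf, hproj⟩
    refine ⟨h1, (Equiv.setCongr hS').symm ∘ f ∘ (Equiv.setCongr hS),
      (Equiv.setCongr hS').symm.bijective.comp (hf.comp (Equiv.setCongr hS).bijective), ?_⟩
    intro M
    have := hproj ((Equiv.setCongr hS) M)
    exact this

/-- reduction of modular equivalence to visible equivalence via
the input generator module `G_I`. -/
theorem modEq_iff_visEq_with_generator (P Q : SMod) (I : Finset ℕ)
    (hP : P.wf) (hQ : Q.wf)
    (hPI : P.I = ↑I) (hQI : Q.I = ↑I) (hO : P.O = Q.O) :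
    P.modEq Q ↔ (P.comp (genMod I)).visEq (Q.comp (genMod I)) := by
  have hSP := SM_comp_gen P I hP hPI
  have hSQ := SM_comp_gen Q I hQ hQI
  have hvP : (P.comp (genMod I)).vis = P.vis := by
    simp only [SMod.comp, SMod.vis, genMod, hPI]
    ext x
    simp only [Set.mem_union, Set.mem_diff, Set.mem_empty_iff_false]
    tauto
  have hvQ : (Q.comp (genMod I)).vis = Q.vis := by
    simp only [SMod.comp, SMod.vis, genMod, hQI]
    ext x
    simp only [Set.mem_union, Set.mem_diff, Set.mem_empty_iff_false]
    tauto
  have hcong := visEq_congr hSP hvP hSQ hvQ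
  constructor
  · rintro ⟨_, h⟩
    exact hcong.mpr h
  · intro h
    exact ⟨hPI.trans hQI.symm, hcong.mp h⟩
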